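/- Let ℓ ≥ 1 and let C' = A'B' be the (2^ℓ × 2^ℓ·2ℓ) matrix defined as follows: rows of A' are indexed by x ∈ {0,1}^ℓ in lexicographic order with A'[x, j] = x_j for 1 ≤ j ≤ ℓ and A'[x, j] = 1 for ℓ < j ≤ 2ℓ; columns of B' are indexed by (y, k) ∈ {0,1}^ℓ × {1, …, 2ℓ} in lexicographic order with B'[i,(y,k)] = 1 if i = k ≤ ℓ, B'[i,(y,k)] = y_{k−ℓ} if i = k > ℓ, and B'[i,(y,k)] = 0 otherwise. Then the binary string of length 2^{2ℓ}·2ℓ obtained by reading the entries of C' row by row (within each row, in the lexicographic order of column indices (y, k)) contains every binary string w ∈ {0,1}^{2ℓ} as a contiguous substring; in fact, for every x, y ∈ {0,1}^ℓ the string x ∘ y occurs as the contiguous block of positions (y,1), …, (y,2ℓ) of row x. -/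

import Mathlib

/-- The `j`-th bit (0-indexed, most significant bit first) of the `ℓ`-bit
binary representation of `x`. -/
def bitOf (ℓ x j : ℕ) : ℕ := x / 2 ^ (ℓ - 1 - j) % 2

lemma infix_flatten_of_mem {l : List ℕ} {L : List (List ℕ)} (h : l ∈ L) :
    l <:+: L.flatten := by
  induction L with
  | nil => simp at h
  | cons a L ih =>
    simp only [List.flatten_cons]
    rcases List.mem_cons.mp h with rfl | h
    · exact (l.prefix_append L.flatten).isInfix
    · exact (ih h).trans (List.suffix_append a L.flatten).isInfix

lemma exists_bits (ℓ : ℕ) : ∀ w : List ℕ, w.length = ℓ → (∀ b ∈ w, b = 0 ∨ b = 1) →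
    ∃ x < 2 ^ ℓ, (List.range ℓ).map (bitOf ℓ x) = w := by
  induction ℓ with
  | zero =>
    intro w hw _
    exact ⟨0, by norm_num, by simpa using (List.length_eq_zero_iff.mp hw).symm⟩
  | succ ℓ ih =>
    intro w hw hb
    match w with
    | [] => simp at hw
    | b :: w' =>
      obtain ⟨x', hx', hmap⟩ := ih w' (by simpa using hw) (fun c hc => hb c (by simp [hc]))
      have hb1 : b = 0 ∨ b = 1 := hb b (by simp)
      refine ⟨b * 2 ^ ℓ + x', ?_, ?_⟩
      · have : b ≤ 1 := by rcases hb1 with h | h <;> omega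
        calc b * 2 ^ ℓ + x' < b * 2 ^ ℓ + 2 ^ ℓ := by omega
          _ ≤ 1 * 2 ^ ℓ + 2 ^ ℓ := by nlinarith [(Nat.pow_pos (by norm_num : 0 < 2) : 0 < 2 ^ ℓ)]
          _ = 2 ^ (ℓ + 1) := by ring
      · rw [List.range_succ_eq_map]
        simp only [List.map_cons, List.map_map]
        congr 1
        · -- bit 0
          show bitOf (ℓ + 1) (b * 2 ^ ℓ + x') 0 = b
          unfold bitOf
          simp only [Nat.add_sub_cancel, Nat.sub_zero]
          rw [mul_comm, Nat.mul_add_div (Nat.pow_pos (by norm_num : 0 < 2) : 0 < 2 ^ ℓ),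
            Nat.div_eq_of_lt hx', Nat.add_zero]
          rcases hb1 with h | h <;> simp [h]
        · -- remaining bits
          rw [← hmap]
          apply List.map_congr_left
          intro j hj
          simp only [List.mem_range] at hj
          show bitOf (ℓ + 1) (b * 2 ^ ℓ + x') (j + 1) = bitOf ℓ x' j
          unfold bitOf
          have h1 : ℓ + 1 - 1 - (j + 1) = ℓ - 1 - j := by omega
          rw [h1]
          have h2 : b * 2 ^ ℓ = 2 ^ (ℓ - 1 - j) * (b * 2 ^ j * 2) := by
            have : 2 ^ ℓ = 2 ^ (ℓ - 1 - j) * 2 ^ (j + 1) := by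
              rw [← pow_add]; congr 1; omega
            rw [this]; ring
          rw [h2, Nat.mul_add_div (Nat.pow_pos (by norm_num : 0 < 2)),
            Nat.add_comm, Nat.add_mul_mod_self_right]

theorem stmt12 (ℓ : ℕ) (hℓ : 1 ≤ ℓ) :
    let A' : Matrix (Fin (2 ^ ℓ)) (Fin (2 * ℓ)) ℕ :=
      fun x j => if (j : ℕ) < ℓ then bitOf ℓ x j else 1
    let B' : Matrix (Fin (2 * ℓ)) (Fin (2 ^ ℓ) × Fin (2 * ℓ)) ℕ :=
      fun i yk => if (i : ℕ) = (yk.2 : ℕ) then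
          (if (yk.2 : ℕ) < ℓ then 1 else bitOf ℓ yk.1 ((yk.2 : ℕ) - ℓ))
        else 0
    -- the entries of `C' = A'B'` read row by row (columns `(y,k)` in
    -- lexicographic order within each row)
    let rowStr : List ℕ :=
      ((List.finRange (2 ^ ℓ)).map (fun x =>
        ((List.finRange (2 ^ ℓ)).map (fun y =>
          (List.finRange (2 * ℓ)).map (fun k => (A' * B') x (y, k)))).flatten)).flatten
    (∀ w : List ℕ, w.length = 2 * ℓ → (∀ b ∈ w, b = 0 ∨ b = 1) → w <:+: rowStr) ∧
    ∀ x y : Fin (2 ^ ℓ),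
      ((List.finRange (2 * ℓ)).map (fun k => (A' * B') x (y, k))) =
        (List.range ℓ).map (bitOf ℓ x) ++ (List.range ℓ).map (bitOf ℓ y) := by
  intro A' B' rowStr
  -- entry formula
  have entry : ∀ (x y : Fin (2 ^ ℓ)) (k : Fin (2 * ℓ)),
      (A' * B') x (y, k) = if (k : ℕ) < ℓ then bitOf ℓ x k else bitOf ℓ y ((k : ℕ) - ℓ) := by
    intro x y k
    rw [Matrix.mul_apply]
    rw [Finset.sum_eq_single k]
    · simp only [A', B', if_pos rfl]
      split <;> simp
    · intro i _ hik
      have : (i : ℕ) ≠ (k : ℕ) := fun h => hik (Fin.ext h)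
      simp [B', this]
    · simp
  have block : ∀ x y : Fin (2 ^ ℓ),
      ((List.finRange (2 * ℓ)).map (fun k => (A' * B') x (y, k))) =
        (List.range ℓ).map (bitOf ℓ x) ++ (List.range ℓ).map (bitOf ℓ y) := by
    intro x y
    apply List.ext_getElem
    · simp [two_mul]
    · intro n h1 h2
      simp only [List.getElem_map, List.getElem_finRange, Fin.cast_mk]
      rw [entry]
      simp only [List.length_map, List.length_finRange] at h1
      rcases lt_or_ge n ℓ with h | h
      · rw [if_pos h, List.getElem_append_left (by simpa using h)]
        simp
      · rw [if_neg (not_lt.mpr h), List.getElem_append_right (by simpa using h)]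
        simp
  refine ⟨?_, block⟩
  intro w hw hb
  obtain ⟨x, hx, hxw⟩ := exists_bits ℓ (w.take ℓ) (by simp [hw]; omega)
    (fun b h => hb b (List.mem_of_mem_take h))
  obtain ⟨y, hy, hyw⟩ := exists_bits ℓ (w.drop ℓ) (by simp [hw]; omega)
    (fun b h => hb b (List.mem_of_mem_drop h))
  have hweq : w = (List.range ℓ).map (bitOf ℓ x) ++ (List.range ℓ).map (bitOf ℓ y) := by
    rw [hxw, hyw, List.take_append_drop]
  rw [hweq, ← block ⟨x, hx⟩ ⟨y, hy⟩]
  have h1 : ((List.finRange (2 * ℓ)).map (fun k => (A' * B') ⟨x, hx⟩ ((⟨y, hy⟩ : Fin (2^ℓ)), k)))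
      <:+: ((List.finRange (2 ^ ℓ)).map (fun y =>
          (List.finRange (2 * ℓ)).map (fun k => (A' * B') ⟨x, hx⟩ (y, k)))).flatten := by
    apply infix_flatten_of_mem
    exact List.mem_map.mpr ⟨⟨y, hy⟩, List.mem_finRange _, rfl⟩
  refine h1.trans (infix_flatten_of_mem ?_)
  exact List.mem_map.mpr ⟨⟨x, hx⟩, List.mem_finRange _, rfl⟩
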